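/- Let 0 < α, β, γ, δ < π with α + β + γ + δ ≤ π. Then the quadruple product C₃^α · C₃^β · C₃^γ · C₃^δ in SL₂(ℝ) equals all of SL₂(ℝ); in particular -I is a product of four elliptic elements with rotation angles α, β, γ, δ. -/

import Mathlib

open Matrix Real

abbrev SL2R := Matrix.SpecialLinearGroup (Fin 2) ℝ

noncomputable def Rot (θ : ℝ) : Matrix (Fin 2) (Fin 2) ℝ :=
  !![Real.cos θ, -Real.sin θ; Real.sin θ, Real.cos θ]

/-- The conjugacy class C₃^θ of the rotation R(θ) in SL₂(ℝ). -/
noncomputable def C3 (θ : ℝ) : Set SL2R :=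
  {A | ∃ g : SL2R, A.val = g.val * Rot θ * (g⁻¹).val}

def mk2 (a b c d : ℝ) (h : a * d - b * c = 1) : SL2R :=
  ⟨!![a, b; c, d], by rw [Matrix.det_fin_two_of]; linarith⟩

@[simp] lemma mk2_val (a b c d : ℝ) (h) : (mk2 a b c d h).val = !![a, b; c, d] := rfl

lemma inv_val (g : SL2R) :
    (g⁻¹).val = !![g.1 1 1, -g.1 0 1; -g.1 1 0, g.1 0 0] := by
  rw [Matrix.SpecialLinearGroup.SL2_inv_expl]
  ext i j
  fin_cases i <;> fin_cases j <;> rfl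

lemma det_entries (M : SL2R) : M.1 0 0 * M.1 1 1 - M.1 0 1 * M.1 1 0 = 1 := by
  have := M.2
  rw [Matrix.det_fin_two] at this
  linarith

lemma key_conj (a b c d S C u x : ℝ) (hc : c ≠ 0) (hu0 : u ≠ 0)
    (htr : a + d = 2 * C) (hdet : a * d - b * c = 1) (hpy : S ^ 2 + C ^ 2 = 1)
    (hu : u * u = S / c) (hx : x = (a - C) / c) :
    !![a, b; c, d] = !![u, x / u; 0, 1 / u] * !![C, -S; S, C] * !![1 / u, -(x / u); -0, u] := by
  ext i j
  fin_cases i <;> fin_cases j <;>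
    simp [Matrix.mul_apply, Fin.sum_univ_two] <;> field_simp
  · rw [show u ^ 2 = u * u by ring, hu, hx]; field_simp; ring
  · rw [show u ^ 2 = u * u by ring, hu, hx]
    field_simp
    linear_combination (-S) * hdet + S * a * htr + S * hpy
  · rw [show u ^ 2 = u * u by ring, hu]; field_simp
  · rw [show u ^ 2 = u * u by ring, hu, hx]
    field_simp
    linear_combination S * htr

lemma mem_C3_of {θ : ℝ} (hθ1 : 0 < θ) (hθ2 : θ < π) {M : SL2R}
    (htr : M.1 0 0 + M.1 1 1 = 2 * Real.cos θ) (hc : 0 < M.1 1 0) : M ∈ C3 θ := by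
  have hdet : M.1 0 0 * M.1 1 1 - M.1 0 1 * M.1 1 0 = 1 := det_entries M
  have hs : 0 < Real.sin θ := Real.sin_pos_of_pos_of_lt_pi hθ1 hθ2
  have hy0 : 0 < Real.sin θ / M.1 1 0 := div_pos hs hc
  have hu0 : (0:ℝ) < Real.sqrt (Real.sin θ / M.1 1 0) := Real.sqrt_pos.2 hy0
  have hu2 : Real.sqrt (Real.sin θ / M.1 1 0) * Real.sqrt (Real.sin θ / M.1 1 0)
      = Real.sin θ / M.1 1 0 := Real.mul_self_sqrt hy0.le
  refine ⟨mk2 (Real.sqrt (Real.sin θ / M.1 1 0))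
      ((M.1 0 0 - Real.cos θ) / M.1 1 0 / Real.sqrt (Real.sin θ / M.1 1 0)) 0
      (1 / Real.sqrt (Real.sin θ / M.1 1 0)) (by field_simp; ring), ?_⟩
  rw [inv_val]
  have := key_conj (M.1 0 0) (M.1 0 1) (M.1 1 0) (M.1 1 1) (Real.sin θ) (Real.cos θ)
      (Real.sqrt (Real.sin θ / M.1 1 0)) ((M.1 0 0 - Real.cos θ) / M.1 1 0)
      (ne_of_gt hc) (ne_of_gt hu0) htr hdet (Real.sin_sq_add_cos_sq θ) hu2 rfl
  simp only [mk2_val, Rot]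
  rw [Matrix.eta_fin_two M.1]
  exact this
lemma C3_conj {θ : ℝ} {A : SL2R} (h : A ∈ C3 θ) (g : SL2R) : g * A * g⁻¹ ∈ C3 θ := by
  obtain ⟨k, hk⟩ := h
  refine ⟨g * k, ?_⟩
  have : ((g * k)⁻¹ : SL2R).val = (k⁻¹).val * (g⁻¹).val := by
    rw [_root_.mul_inv_rev]; simp
  simp only [Matrix.SpecialLinearGroup.coe_mul, hk, this]
  noncomm_ring

lemma tr_conj (g M : SL2R) :
    (g * M * g⁻¹).1 0 0 + (g * M * g⁻¹).1 1 1 = M.1 0 0 + M.1 1 1 := by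
  have h1 : (g * M * g⁻¹).val = g.val * M.val * (g⁻¹).val := by simp
  have h2 : (g⁻¹).val * g.val = 1 := by
    have h3 : ((g⁻¹ * g : SL2R) : Matrix (Fin 2) (Fin 2) ℝ)
        = ((1 : SL2R) : Matrix (Fin 2) (Fin 2) ℝ) := by
      norm_num
    rw [Matrix.SpecialLinearGroup.coe_mul] at h3
    simpa using h3
  have : Matrix.trace ((g * M * g⁻¹).val) = Matrix.trace M.val := by
    rw [h1, Matrix.trace_mul_comm (g.val * M.val) (g⁻¹).val, ← Matrix.mul_assoc, h2, Matrix.one_mul]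
  simpa [Matrix.trace_fin_two] using this
lemma entry00 (a b c d : ℝ) : !![a, b; c, d] 0 0 = a := by simp
lemma entry01 (a b c d : ℝ) : !![a, b; c, d] 0 1 = b := by simp
lemma entry10 (a b c d : ℝ) : !![a, b; c, d] 1 0 = c := by simp
lemma entry11 (a b c d : ℝ) : !![a, b; c, d] 1 1 = d := by simp

lemma prod2_diag {θ₁ θ₂ lam : ℝ} (h1 : 0 < θ₁) (h1' : θ₁ < π) (h2 : 0 < θ₂) (h2' : θ₂ < π)
    (hlam : lam < -1) (MD : SL2R) (hMD : MD.val = !![lam, 0; 0, 1/lam]) :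
    ∃ C ∈ C3 θ₁, ∃ D ∈ C3 θ₂, C * D = MD := by
  have hlam0 : lam ≠ 0 := by linarith
  have hinv : lam * (1/lam) = 1 := by field_simp
  have hgap : 0 < 1/lam - lam := by nlinarith
  obtain ⟨w, hw⟩ : ∃ w : ℝ, w * (1/lam - lam) = 2*Real.cos θ₂ - Real.cos θ₁*(lam + 1/lam) :=
    ⟨(2*Real.cos θ₂ - Real.cos θ₁*(lam + 1/lam)) / (1/lam - lam),
      div_mul_cancel₀ _ (ne_of_gt hgap)⟩
  have hdetC : (Real.cos θ₁ + w) * (Real.cos θ₁ - w) - (-(Real.sin θ₁^2 + w^2)) * 1 = 1 := by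
    nlinarith [Real.sin_sq_add_cos_sq θ₁]
  set C : SL2R := mk2 (Real.cos θ₁ + w) (-(Real.sin θ₁^2 + w^2)) 1 (Real.cos θ₁ - w) hdetC
    with hCdef
  have hC : C ∈ C3 θ₁ := by
    apply mem_C3_of h1 h1'
    · rw [hCdef]; simp only [mk2_val, entry00, entry11]; ring
    · rw [hCdef]; simp only [mk2_val, entry10]; norm_num
  set D : SL2R := C⁻¹ * MD with hDdef
  have hDval : D.val = !![(Real.cos θ₁ - w)*lam, (Real.sin θ₁^2 + w^2)*(1/lam);
      -lam, (Real.cos θ₁ + w)*(1/lam)] := by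
    rw [hDdef, Matrix.SpecialLinearGroup.coe_mul, inv_val, hMD, hCdef]
    simp only [mk2_val, entry00, entry01, entry10, entry11]
    rw [Matrix.mul_fin_two]
    congr 1 <;> ring
  have hD : D ∈ C3 θ₂ := by
    apply mem_C3_of h2 h2'
    · rw [hDval, entry00, entry11]
      field_simp
      linear_combination lam * hw - (Real.cos θ₁ + w) * hinv
    · rw [hDval, entry10]; linarith
  exact ⟨C, hC, D, hD, by rw [hDdef, mul_inv_cancel_left]⟩
lemma conj_val (h M : SL2R) : (h * M * h⁻¹).val = h.val * M.val * (h⁻¹).val := by simp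

lemma exists_conj_c_ne (M : SL2R) (htr : M.1 0 0 + M.1 1 1 < -2) :
    ∃ h : SL2R, (h * M * h⁻¹).1 1 0 ≠ 0 := by
  by_cases hr : M.1 1 0 ≠ 0
  · exact ⟨1, by simpa using hr⟩
  push_neg at hr
  by_cases hq : M.1 0 1 ≠ 0
  · refine ⟨mk2 0 (-1) 1 0 (by norm_num), ?_⟩
    rw [conj_val, inv_val]
    simp only [mk2_val, entry00, entry01, entry10, entry11]
    rw [Matrix.eta_fin_two M.1, Matrix.mul_fin_two, Matrix.mul_fin_two]
    simp only [entry10]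
    intro h
    apply hq
    nlinarith [h]
  · push_neg at hq
    refine ⟨mk2 1 0 1 1 (by norm_num), ?_⟩
    rw [conj_val, inv_val]
    simp only [mk2_val, entry00, entry01, entry10, entry11]
    rw [Matrix.eta_fin_two M.1, Matrix.mul_fin_two, Matrix.mul_fin_two]
    simp only [entry10]
    have hdet := det_entries M
    rw [hr, hq] at hdet
    intro h
    have hne : M.1 0 0 ≠ M.1 1 1 := by
      intro he
      rw [he] at hdet htr
      nlinarith
    apply hne
    rw [hr, hq] at h
    nlinarith [h]

lemma key_diag (p q r s lam Δ : ℝ) (hh : r ≠ 0) (hlam0 : lam ≠ 0) (hΔ0 : Δ ≠ 0)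
    (hdetN : p * s - q * r = 1) (hroot : lam * lam - (p + s) * lam + 1 = 0)
    (hΔdef : Δ = lam - 1/lam) :
    !![p, q; r, s] * !![(lam - s)/(r * Δ), 1/lam - s; 1/Δ, r]
      = !![(lam - s)/(r * Δ), 1/lam - s; 1/Δ, r] * !![lam, 0; 0, 1/lam] := by
  rw [Matrix.mul_fin_two, Matrix.mul_fin_two]
  ext i j
  fin_cases i <;> fin_cases j <;>
    simp only [Fin.zero_eta, Fin.mk_one, entry00, entry01, entry10, entry11] <;> field_simp
  · linear_combination (-lam) * hdetN + (-lam) * hroot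
  · linear_combination (-(r*Δ*lam^2)) * hdetN + (-(r*Δ)) * hroot
  · ring
  · ring

lemma diag_of_hyperbolic (M : SL2R) (htr : M.1 0 0 + M.1 1 1 < -2) :
    ∃ (G N : SL2R) (lam : ℝ), lam < -1 ∧ N.val = !![lam, 0; 0, 1/lam] ∧ M = G * N * G⁻¹ := by
  obtain ⟨h, hh⟩ := exists_conj_c_ne M htr
  obtain ⟨N', hN'⟩ : ∃ N'' : SL2R, N'' = h * M * h⁻¹ := ⟨_, rfl⟩
  have htrN : N'.1 0 0 + N'.1 1 1 < -2 := by rw [hN', tr_conj]; exact htr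
  set r : ℝ := N'.1 1 0 with hr
  set s : ℝ := N'.1 1 1 with hs
  set p : ℝ := N'.1 0 0 with hp
  set q : ℝ := N'.1 0 1 with hq
  rw [← hN'] at hh
  have hdetN : p * s - q * r = 1 := det_entries N'
  have htrN' : p + s < -2 := htrN
  obtain ⟨lam, hlam, hroot⟩ : ∃ lam : ℝ, lam < -1 ∧ lam * lam - (p+s) * lam + 1 = 0 := by
    have hτ4 : 0 ≤ (p+s)^2 - 4 := by nlinarith
    have hsq : Real.sqrt ((p+s)^2-4) ^ 2 = (p+s)^2 - 4 := Real.sq_sqrt hτ4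
    have hsqnn : 0 ≤ Real.sqrt ((p+s)^2-4) := Real.sqrt_nonneg _
    exact ⟨((p+s) - Real.sqrt ((p+s)^2 - 4))/2, by linarith,
      by linear_combination (1/4) * hsq⟩
  have hlam0 : lam ≠ 0 := by linarith
  have hmu : lam * (1/lam) = 1 := by field_simp
  obtain ⟨Δ, hΔdef⟩ : ∃ Δ : ℝ, Δ = lam - 1/lam := ⟨_, rfl⟩
  have hΔ0 : Δ ≠ 0 := by
    rw [hΔdef]; intro hz; nlinarith [(sub_eq_zero.mp hz)]
  have hdetg : (lam - s)/(r * Δ) * r - (1/lam - s) * (1/Δ) = 1 := by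
    have hr0 : r ≠ 0 := hh
    field_simp
    linear_combination (-lam) * hΔdef + hmu
  set G0 : SL2R := mk2 ((lam - s)/(r * Δ)) (1/lam - s) (1/Δ) r hdetg with hG0
  set ND : SL2R := mk2 lam 0 0 (1/lam) (by linear_combination hmu) with hND
  have hN'val : N'.val = !![p, q; r, s] := Matrix.eta_fin_two N'.val
  have keySL : N' * G0 = G0 * ND := by
    apply Subtype.coe_injective
    show (N' * G0).val = (G0 * ND).val
    rw [Matrix.SpecialLinearGroup.coe_mul, Matrix.SpecialLinearGroup.coe_mul, hN'val, hG0, hND]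
    simp only [mk2_val]
    exact key_diag p q r s lam Δ hh hlam0 hΔ0 hdetN hroot hΔdef
  have hNeq : N' = G0 * ND * G0⁻¹ := by rw [← keySL]; group
  refine ⟨h⁻¹ * G0, ND, lam, hlam, rfl, ?_⟩
  calc M = h⁻¹ * (h * M * h⁻¹) * h := by group
    _ = h⁻¹ * (G0 * ND * G0⁻¹) * h := by rw [← hN', hNeq]
    _ = (h⁻¹ * G0) * ND * (h⁻¹ * G0)⁻¹ := by rw [_root_.mul_inv_rev, inv_inv]; group
lemma prod2_hyp {θ₁ θ₂ : ℝ} (h1 : 0 < θ₁) (h1' : θ₁ < π) (h2 : 0 < θ₂) (h2' : θ₂ < π)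
    (M : SL2R) (htr : M.1 0 0 + M.1 1 1 < -2) :
    ∃ C ∈ C3 θ₁, ∃ D ∈ C3 θ₂, C * D = M := by
  obtain ⟨G, N, lam, hlam, hNval, hM⟩ := diag_of_hyperbolic M htr
  obtain ⟨C, hC, D, hD, hCD⟩ := prod2_diag h1 h1' h2 h2' hlam N hNval
  refine ⟨G * C * G⁻¹, C3_conj hC G, G * D * G⁻¹, C3_conj hD G, ?_⟩
  rw [hM, ← hCD]; group

noncomputable def RotSL (φ : ℝ) : SL2R :=
  ⟨Rot φ, by
    unfold Rot; rw [Matrix.det_fin_two_of]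
    nlinarith [Real.sin_sq_add_cos_sq φ]⟩

@[simp] lemma RotSL_val (φ : ℝ) : (RotSL φ).val = Rot φ := rfl

lemma RotSL_mem (φ : ℝ) : RotSL φ ∈ C3 φ := ⟨1, by simp⟩

lemma Rot_mul (x y : ℝ) : Rot x * Rot y = Rot (x + y) := by
  unfold Rot
  rw [Matrix.mul_fin_two]
  rw [Real.cos_add, Real.sin_add]
  congr 1 <;> ring

lemma prod2_rot_aux {θ₁ θ₂ φ c : ℝ} (h1 : 0 < θ₁) (h1' : θ₁ < π) (h2 : 0 < θ₂) (h2' : θ₂ < π)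
    (hc0 : 0 < c)
    (htrh : Real.sin φ * (c * c + Real.sin θ₁^2) = (2*Real.cos θ₂ - 2*Real.cos θ₁*Real.cos φ) * c)
    (hpos : 0 < Real.cos θ₁ * Real.sin φ - c * Real.cos φ) :
    ∃ C ∈ C3 θ₁, ∃ D ∈ C3 θ₂, C * D = RotSL φ := by
  have hdetC : Real.cos θ₁ * Real.cos θ₁ - (-(Real.sin θ₁^2)/c) * c = 1 := by
    field_simp
    nlinarith [Real.sin_sq_add_cos_sq θ₁]
  set C : SL2R := mk2 (Real.cos θ₁) (-(Real.sin θ₁^2)/c) c (Real.cos θ₁) hdetC with hCdef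
  have hC : C ∈ C3 θ₁ := by
    apply mem_C3_of h1 h1'
    · rw [hCdef]; simp only [mk2_val, entry00, entry11]; ring
    · rw [hCdef]; simp only [mk2_val, entry10]; exact hc0
  set D : SL2R := C⁻¹ * RotSL φ with hDdef
  have hDval : D.val = !![Real.cos θ₁ * Real.cos φ + (Real.sin θ₁^2)/c * Real.sin φ,
      Real.cos θ₁ * (-Real.sin φ) + (Real.sin θ₁^2)/c * Real.cos φ;
      -c * Real.cos φ + Real.cos θ₁ * Real.sin φ,
      -c * (-Real.sin φ) + Real.cos θ₁ * Real.cos φ] := by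
    rw [hDdef, Matrix.SpecialLinearGroup.coe_mul, inv_val, hCdef]
    simp only [mk2_val, entry00, entry01, entry10, entry11, RotSL_val]
    unfold Rot
    rw [Matrix.mul_fin_two]
    congr 1 <;> ring
  have hD : D ∈ C3 θ₂ := by
    apply mem_C3_of h2 h2'
    · rw [hDval, entry00, entry11]
      field_simp
      linear_combination htrh
    · rw [hDval, entry10]; linarith
  exact ⟨C, hC, D, hD, by rw [hDdef, mul_inv_cancel_left]⟩

lemma prod2_rot {θ₁ θ₂ φ : ℝ} (h1 : 0 < θ₁) (h1' : θ₁ < π) (h2 : 0 < θ₂) (h2' : θ₂ < π)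
    (hs : θ₁ + θ₂ ≤ φ) (hφ : φ < π) :
    ∃ C ∈ C3 θ₁, ∃ D ∈ C3 θ₂, C * D = RotSL φ := by
  have hφ0 : 0 < φ := by linarith
  have hsφ : 0 < Real.sin φ := Real.sin_pos_of_pos_of_lt_pi hφ0 hφ
  have hs1 : 0 < Real.sin θ₁ := Real.sin_pos_of_pos_of_lt_pi h1 h1'
  have hsub : 0 < Real.sin (φ - θ₁) := by
    apply Real.sin_pos_of_pos_of_lt_pi <;> [linarith; linarith]
  have hcos : Real.cos (φ - θ₁) ≤ Real.cos θ₂ :=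
    Real.cos_le_cos_of_nonneg_of_le_pi (le_of_lt h2) (by linarith) (by linarith)
  rw [Real.cos_sub] at hcos
  obtain ⟨K, hK⟩ : ∃ K : ℝ, K * Real.sin φ = 2*Real.cos θ₂ - 2*Real.cos θ₁*Real.cos φ :=
    ⟨(2*Real.cos θ₂ - 2*Real.cos θ₁*Real.cos φ)/Real.sin φ, div_mul_cancel₀ _ (ne_of_gt hsφ)⟩
  have hK2 : 2 * Real.sin θ₁ ≤ K := by nlinarith
  have hd4 : 0 ≤ K^2 - 4*Real.sin θ₁^2 := by nlinarith
  obtain ⟨sd, hsdnn, hsd2⟩ : ∃ sd : ℝ, 0 ≤ sd ∧ sd^2 = K^2 - 4*Real.sin θ₁^2 :=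
    ⟨Real.sqrt _, Real.sqrt_nonneg _, Real.sq_sqrt hd4⟩
  have hsdK : sd < K := by nlinarith
  have hsin_sub := Real.sin_sub φ θ₁
  by_cases hcφ : Real.cos φ ≤ 0
  · -- c = (K + sd)/2, c ≥ sin θ₁
    have hc0 : 0 < (K + sd)/2 := by nlinarith
    have hcge : Real.sin θ₁ ≤ (K + sd)/2 := by nlinarith
    apply prod2_rot_aux h1 h1' h2 h2' hc0
    · linear_combination (Real.sin φ/4) * hsd2 + ((K+sd)/2) * hK
    · nlinarith [mul_nonneg (sub_nonneg.mpr hcge) (neg_nonneg.mpr hcφ)]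
  · push_neg at hcφ
    have hc0 : 0 < (K - sd)/2 := by nlinarith
    have hcle : (K - sd)/2 ≤ Real.sin θ₁ := by nlinarith
    apply prod2_rot_aux h1 h1' h2 h2' hc0
    · linear_combination (Real.sin φ/4) * hsd2 + ((K-sd)/2) * hK
    · nlinarith [mul_nonneg (sub_nonneg.mpr hcle) (le_of_lt hcφ)]
lemma tr_inv_mul (p q r s : ℝ) (h : p*s - q*r = 1) (X : SL2R) :
    ((mk2 p q r s h)⁻¹ * X).1 0 0 + ((mk2 p q r s h)⁻¹ * X).1 1 1
      = s * X.1 0 0 - q * X.1 1 0 - r * X.1 0 1 + p * X.1 1 1 := by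
  have hval : ((mk2 p q r s h)⁻¹ * X).val = ((mk2 p q r s h)⁻¹).val * X.val :=
    Matrix.SpecialLinearGroup.coe_mul _ _
  rw [hval, inv_val]
  simp only [mk2_val, entry00, entry01, entry10, entry11]
  rw [Matrix.eta_fin_two X.val, Matrix.mul_fin_two]
  simp only [entry00, entry01, entry10, entry11]
  ring

lemma tr_mk2 (p q r s : ℝ) (h : p*s - q*r = 1) :
    (mk2 p q r s h).1 0 0 + (mk2 p q r s h).1 1 1 = p + s := by
  simp only [mk2_val, entry00, entry11]

lemma neg_one_val : ((-1 : SL2R)).val = !![-1, 0; 0, -1] := by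
  rw [Matrix.SpecialLinearGroup.coe_neg]
  ext i j
  fin_cases i <;> fin_cases j <;>
    simp [Matrix.SpecialLinearGroup.coe_one, Matrix.one_apply]

lemma exists_Y (X : SL2R) (hX : X ≠ -1) :
    ∃ Y : SL2R, (Y.1 0 0 + Y.1 1 1 < -2) ∧ ((Y⁻¹ * X).1 0 0 + (Y⁻¹ * X).1 1 1 < -2) := by
  have hdetX := det_entries X
  by_cases h12 : X.1 0 1 ≠ 0
  · -- case x12 ≠ 0
    obtain ⟨S', hS'⟩ : ∃ S' : ℝ, S' = |X.1 0 0 + X.1 1 1| := ⟨_, rfl⟩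
    obtain ⟨P', hP'⟩ : ∃ P' : ℝ, P' = |X.1 0 1 * X.1 1 0| := ⟨_, rfl⟩
    have hS'0 : 0 ≤ S' := hS' ▸ abs_nonneg _
    have hP'0 : 0 ≤ P' := hP' ▸ abs_nonneg _
    obtain ⟨t, ht⟩ : ∃ t : ℝ, t = 2*S' + 3*P' + 3 := ⟨_, rfl⟩
    have ht3 : 3 ≤ t := by linarith
    have ht0 : (0:ℝ) < t := by linarith
    have hdetY : (-2:ℝ)*(-2) - (3*X.1 0 1/t)*(t/X.1 0 1) = 1 := by
      field_simp; norm_num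
    refine ⟨mk2 (-2) (3*X.1 0 1/t) (t/X.1 0 1) (-2) hdetY, ?_, ?_⟩
    · rw [tr_mk2]; norm_num
    · rw [tr_inv_mul]
      have e1 : (t/X.1 0 1) * X.1 0 1 = t := div_mul_cancel₀ _ h12
      have hP1 : -P' ≤ X.1 0 1 * X.1 1 0 := hP' ▸ neg_abs_le _
      have hP2 : X.1 0 1 * X.1 1 0 ≤ P' := hP' ▸ le_abs_self _
      have hS1 : -S' ≤ X.1 0 0 + X.1 1 1 := hS' ▸ neg_abs_le _
      have hu_ge : -P' ≤ 3*X.1 0 1 * X.1 1 0/t := by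
        rw [le_div_iff₀ ht0]
        nlinarith [mul_nonneg hP'0 (by linarith : (0:ℝ) ≤ t - 3)]
      have : (3*X.1 0 1/t) * X.1 1 0 = 3*X.1 0 1 * X.1 1 0/t := by ring
      rw [this, e1]
      nlinarith
  · push_neg at h12
    by_cases h21 : X.1 1 0 ≠ 0
    · -- case x21 ≠ 0
      obtain ⟨A', hA'⟩ : ∃ A' : ℝ, A' = |2 - 2*(X.1 0 0 + X.1 1 1)| + 1 := ⟨_, rfl⟩
      have hA'1 : 0 < A' := by rw [hA']; positivity
      have hA'ge : 2 - 2*(X.1 0 0 + X.1 1 1) ≤ A' - 1 := by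
        rw [hA']; simp only [add_sub_cancel_right]; exact le_abs_self _
      have hdetY : (-2:ℝ)*(-2) - (A'/X.1 1 0)*(3*X.1 1 0/A') = 1 := by
        field_simp; ring
      refine ⟨mk2 (-2) (A'/X.1 1 0) (3*X.1 1 0/A') (-2) hdetY, ?_, ?_⟩
      · rw [tr_mk2]; norm_num
      · rw [tr_inv_mul]
        have e1 : (A'/X.1 1 0) * X.1 1 0 = A' := div_mul_cancel₀ _ h21
        rw [e1, h12]
        linarith
    · -- diagonal case
      push_neg at h21
      rw [h12, h21] at hdetX
      have h11ne : X.1 0 0 ≠ 0 := by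
        intro h; rw [h] at hdetX; norm_num at hdetX
      by_cases hpos : 0 < X.1 0 0
      · have h22pos : 0 < X.1 1 1 := by nlinarith
        have hdetY : (-3*X.1 0 0)*(-3*X.1 1 1) - (8:ℝ)*1 = 1 := by
          linear_combination 9 * hdetX
        refine ⟨mk2 (-3*X.1 0 0) 8 1 (-3*X.1 1 1) hdetY, ?_, ?_⟩
        · rw [tr_mk2]
          nlinarith [mul_nonneg (sq_nonneg (X.1 0 0 - 1)) h22pos.le]
        · rw [tr_inv_mul, h12, h21]
          nlinarith
      · push_neg at hpos
        have hneg : X.1 0 0 < 0 := lt_of_le_of_ne hpos h11ne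
        have hne1 : X.1 0 0 ≠ -1 := by
          intro h
          apply hX
          apply Subtype.coe_injective
          show X.val = ((-1 : SL2R)).val
          have h22 : X.1 1 1 = -1 := by rw [h] at hdetX; linarith
          rw [neg_one_val, Matrix.eta_fin_two X.val]
          rw [show X.val 0 0 = X.1 0 0 from rfl, show X.val 0 1 = X.1 0 1 from rfl,
            show X.val 1 0 = X.1 1 0 from rfl, show X.val 1 1 = X.1 1 1 from rfl,
            h, h12, h21, h22]
        have hne1' : X.1 0 0 + 1 ≠ 0 := by
          intro h; apply hne1; linarith
        have hdetY : (-3*X.1 0 0/(X.1 0 0 + 1))*(-3/(X.1 0 0 + 1))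
            - ((-3*X.1 0 0/(X.1 0 0 + 1))*(-3/(X.1 0 0 + 1)) - 1)*1 = 1 := by ring
        refine ⟨mk2 _ _ _ _ hdetY, ?_, ?_⟩
        · rw [tr_mk2]
          have : -3*X.1 0 0/(X.1 0 0 + 1) + -3/(X.1 0 0 + 1) = -3 := by
            field_simp; ring
          rw [this]; norm_num
        · rw [tr_inv_mul, h12, h21]
          have key : (-3/(X.1 0 0 + 1)) * X.1 0 0 + (-3*X.1 0 0/(X.1 0 0 + 1)) * X.1 1 1 = -3 := by
            field_simp
            linear_combination (-1) * hdetX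
          simp only [mul_zero, sub_zero]
          linarith [key]
lemma main_univ (α β γ δ : ℝ)
    (hα : α ∈ Set.Ioo 0 π) (hβ : β ∈ Set.Ioo 0 π)
    (hγ : γ ∈ Set.Ioo 0 π) (hδ : δ ∈ Set.Ioo 0 π)
    (hsum : α + β + γ + δ ≤ π) (X : SL2R) :
    ∃ A ∈ C3 α, ∃ B ∈ C3 β, ∃ C ∈ C3 γ, ∃ D ∈ C3 δ, X = A * B * C * D := by
  by_cases hX : X = -1
  · obtain ⟨C, hC, D, hD, hCD⟩ := prod2_rot hγ.1 hγ.2 hδ.1 hδ.2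
      (show γ + δ ≤ π - α - β by linarith) (show π - α - β < π by nlinarith [hα.1, hβ.1])
    refine ⟨RotSL α, RotSL_mem α, RotSL β, RotSL_mem β, C, hC, D, hD, ?_⟩
    rw [hX, mul_assoc, hCD]
    apply Subtype.coe_injective
    show ((-1 : SL2R)).val = (RotSL α * RotSL β * RotSL (π - α - β)).val
    rw [Matrix.SpecialLinearGroup.coe_mul, Matrix.SpecialLinearGroup.coe_mul,
      RotSL_val, RotSL_val, RotSL_val, Rot_mul, Rot_mul, neg_one_val,
      show α + β + (π - α - β) = π by ring]
    unfold Rot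
    rw [Real.cos_pi, Real.sin_pi]
    norm_num
  · obtain ⟨Y, hY1, hY2⟩ := exists_Y X hX
    obtain ⟨A, hA, B, hB, hAB⟩ := prod2_hyp hα.1 hα.2 hβ.1 hβ.2 Y hY1
    obtain ⟨C, hC, D, hD, hCD⟩ := prod2_hyp hγ.1 hγ.2 hδ.1 hδ.2 (Y⁻¹ * X) hY2
    refine ⟨A, hA, B, hB, C, hC, D, hD, ?_⟩
    rw [mul_assoc, hCD, hAB, mul_inv_cancel_left]

theorem quadruple_product_C3_small (α β γ δ : ℝ)
    (hα : α ∈ Set.Ioo 0 π) (hβ : β ∈ Set.Ioo 0 π)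
    (hγ : γ ∈ Set.Ioo 0 π) (hδ : δ ∈ Set.Ioo 0 π)
    (hsum : α + β + γ + δ ≤ π) :
    {X : SL2R | ∃ A ∈ C3 α, ∃ B ∈ C3 β, ∃ C ∈ C3 γ, ∃ D ∈ C3 δ, X = A * B * C * D} =
      Set.univ ∧
    (∃ A ∈ C3 α, ∃ B ∈ C3 β, ∃ C ∈ C3 γ, ∃ D ∈ C3 δ, A * B * C * D = -1) := by
  constructor
  · apply Set.eq_univ_of_forall
    intro X
    exact main_univ α β γ δ hα hβ hγ hδ hsum X
  · obtain ⟨A, hA, B, hB, C, hC, D, hD, h⟩ := main_univ α β γ δ hα hβ hγ hδ hsum (-1)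
    exact ⟨A, hA, B, hB, C, hC, D, hD, h.symm⟩
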